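/- arXiv:1611.01856 — 5 statements merged into one kernel-verified Lean document; each statement's English description precedes it below -/
import Mathlib

section
/- (Distance Duality) K ∩ K' ≠ ∅ if and only if for every pair (p, p') ∈ K × K', either there exists v ∈ V such that d(p, v) ≥ d(p', v), or there exists v' ∈ V' such that d(p', v') ≥ d(p, v'). -/
set_option maxHeartbeats 1000000


open RealInnerProductSpace

private lemma dist_lt_iff_inner {m : ℕ} (a b y : EuclideanSpace ℝ (Fin m)) :
    dist a y < dist b y ↔ ⟪y, b - a⟫ < (‖b‖ ^ 2 - ‖a‖ ^ 2) / 2 := by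
  have ha := norm_sub_sq_real a y
  have hb := norm_sub_sq_real b y
  have hib : ⟪y, b - a⟫ = ⟪b, y⟫ - ⟪a, y⟫ := by
    rw [inner_sub_right, real_inner_comm y b, real_inner_comm y a]
  constructor
  · intro h
    have h2 : dist a y ^ 2 < dist b y ^ 2 :=
      pow_lt_pow_left₀ h dist_nonneg (by norm_num)
    rw [dist_eq_norm, dist_eq_norm] at h2
    rw [hib]; linarith
  · intro h
    rw [hib] at h
    have h2 : ‖a - y‖ ^ 2 < ‖b - y‖ ^ 2 := by linarith
    rw [dist_eq_norm, dist_eq_norm]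
    exact lt_of_pow_lt_pow_left₀ 2 (norm_nonneg _) h2

private lemma inner_isLinearMap {m : ℕ} (c : EuclideanSpace ℝ (Fin m)) :
    IsLinearMap ℝ (fun y : EuclideanSpace ℝ (Fin m) => ⟪y, c⟫) :=
  ⟨fun x y => inner_add_left x y c, fun r x => real_inner_smul_left x c r⟩


private lemma variational_ineq {m : ℕ} {K : Set (EuclideanSpace ℝ (Fin m))}
    (hconv : Convex ℝ K) {p p' : EuclideanSpace ℝ (Fin m)} (hp : p ∈ K)
    (hmin : ∀ q ∈ K, dist p p' ≤ dist q p') :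
    ∀ v ∈ K, ⟪p' - p, v - p⟫ ≤ 0 := by
  intro v hv
  have key : ∀ t : ℝ, 0 < t → t ≤ 1 → ⟪p' - p, v - p⟫ ≤ t / 2 * ‖v - p‖ ^ 2 := by
    intro t ht ht1
    have hq : p + t • (v - p) ∈ K := by
      have h1 : (1 - t) • p + t • v ∈ K :=
        hconv hp hv (by linarith) ht.le (by ring)
      convert h1 using 1
      module
    have hd := hmin _ hq
    rw [dist_eq_norm, dist_eq_norm] at hd
    have hsq : ‖p - p'‖ ^ 2 ≤ ‖p + t • (v - p) - p'‖ ^ 2 :=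
      pow_le_pow_left₀ (norm_nonneg _) hd 2
    have heq : p + t • (v - p) - p' = (p - p') + t • (v - p) := by abel
    rw [heq] at hsq
    have hexp : ‖(p - p') + t • (v - p)‖ ^ 2
        = ‖p - p'‖ ^ 2 + 2 * (t * ⟪p - p', v - p⟫) + t ^ 2 * ‖v - p‖ ^ 2 := by
      rw [norm_add_sq_real, real_inner_smul_right, norm_smul]
      rw [Real.norm_eq_abs, mul_pow, sq_abs]
    rw [hexp] at hsq
    have hinner : ⟪p' - p, v - p⟫ = -⟪p - p', v - p⟫ := by
      rw [← inner_neg_left, neg_sub]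
    rw [hinner]
    nlinarith [sq_nonneg t, ht]
  by_contra hlt
  push_neg at hlt
  set I := ⟪p' - p, v - p⟫ with hI
  set c := ‖v - p‖ ^ 2 with hc
  have hc0 : 0 ≤ c := sq_nonneg _
  have hIc : 0 < I / (c + 1) := div_pos hlt (by linarith)
  have ht1 : min 1 (I / (c + 1)) ≤ 1 := min_le_left _ _
  have ht0 : 0 < min 1 (I / (c + 1)) := lt_min one_pos hIc
  have h := key _ ht0 ht1
  have h2 : min 1 (I / (c + 1)) ≤ I / (c + 1) := min_le_right _ _
  have : I ≤ (I / (c + 1)) / 2 * c := by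
    calc I ≤ min 1 (I / (c + 1)) / 2 * c := h
    _ ≤ (I / (c + 1)) / 2 * c := by
        apply mul_le_mul_of_nonneg_right _ hc0
        linarith
  rw [div_div, div_mul_eq_mul_div, le_div_iff₀ (by linarith : (0:ℝ) < (c+1)*2)] at this
  nlinarith [mul_nonneg hlt.le hc0]

/-- Distance duality: `K ∩ K' ≠ ∅` iff for every `(p, p') ∈ K × K'`, either some `v ∈ V`
satisfies `d(p,v) ≥ d(p',v)`, or some `v' ∈ V'` satisfies `d(p',v') ≥ d(p,v')`. -/
theorem distance_duality {m : ℕ} (V V' : Finset (EuclideanSpace ℝ (Fin m)))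
    (hV : V.Nonempty) (hV' : V'.Nonempty) :
    (convexHull ℝ (V : Set (EuclideanSpace ℝ (Fin m))) ∩
        convexHull ℝ (V' : Set (EuclideanSpace ℝ (Fin m)))).Nonempty ↔
      ∀ p ∈ convexHull ℝ (V : Set (EuclideanSpace ℝ (Fin m))),
        ∀ p' ∈ convexHull ℝ (V' : Set (EuclideanSpace ℝ (Fin m))),
          (∃ v ∈ V, dist p' v ≤ dist p v) ∨ (∃ v' ∈ V', dist p v' ≤ dist p' v') := by
  set K := convexHull ℝ (V : Set (EuclideanSpace ℝ (Fin m))) with hKdef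
  set K' := convexHull ℝ (V' : Set (EuclideanSpace ℝ (Fin m))) with hK'def
  constructor
  · rintro ⟨x, hxK, hxK'⟩ p hp p' hp'
    by_contra hcon
    push_neg at hcon
    obtain ⟨h1, h2⟩ := hcon
    have hx1 : x ∈ {y : EuclideanSpace ℝ (Fin m) | ⟪y, p' - p⟫ < (‖p'‖ ^ 2 - ‖p‖ ^ 2) / 2} := by
      refine convexHull_min ?_ (convex_halfSpace_lt (inner_isLinearMap _) _) hxK
      intro v hv
      exact (dist_lt_iff_inner p p' v).mp (h1 v hv)
    have hx2 : x ∈ {y : EuclideanSpace ℝ (Fin m) | ⟪y, p - p'⟫ < (‖p‖ ^ 2 - ‖p'‖ ^ 2) / 2} := by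
      refine convexHull_min ?_ (convex_halfSpace_lt (inner_isLinearMap _) _) hxK'
      intro v hv
      exact (dist_lt_iff_inner p' p v).mp (h2 v hv)
    have d1 := (dist_lt_iff_inner p p' x).mpr hx1
    have d2 := (dist_lt_iff_inner p' p x).mpr hx2
    linarith
  · intro h
    have hK : IsCompact K := V.finite_toSet.isCompact_convexHull (𝕜 := ℝ)
    have hK' : IsCompact K' := V'.finite_toSet.isCompact_convexHull (𝕜 := ℝ)
    have hKne : K.Nonempty :=
      ((Finset.coe_nonempty.mpr hV).mono (subset_convexHull ℝ _))
    have hK'ne : K'.Nonempty :=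
      ((Finset.coe_nonempty.mpr hV').mono (subset_convexHull ℝ _))
    haveI : Nonempty K := hKne.to_subtype
    haveI : Nonempty K' := hK'ne.to_subtype
    obtain ⟨⟨p, p'⟩, hmem, hmin⟩ := (hK.prod hK').exists_isMinOn (hKne.prod hK'ne)
      (continuous_dist.comp (continuous_fst.prodMk continuous_snd)).continuousOn
    obtain ⟨hpK, hpK'⟩ := hmem
    by_cases hpp : p = p'
    · exact ⟨p, hpK, hpp ▸ hpK'⟩
    exfalso
    have hvar : ∀ v ∈ K, ⟪p' - p, v - p⟫ ≤ 0 := by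
      refine variational_ineq (convex_convexHull ℝ _) hpK (fun q hq => ?_)
      exact isMinOn_iff.mp hmin (q, p') (Set.mk_mem_prod hq hpK')
    have hvar' : ∀ v ∈ K', ⟪p - p', v - p'⟫ ≤ 0 := by
      refine variational_ineq (convex_convexHull ℝ _) hpK' (fun q hq => ?_)
      have := isMinOn_iff.mp hmin (p, q) (Set.mk_mem_prod hpK hq)
      rw [dist_comm p' p, dist_comm q p]
      exact this
    have hnorm : 0 < ‖p' - p‖ := by
      rw [norm_sub_pos_iff]; exact fun hh => hpp hh.symm
    have key1 : ∀ v ∈ K, dist p v < dist p' v := by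
      intro v hv
      have h1 := hvar v hv
      have hexp : ‖(p' - p) - (v - p)‖ ^ 2
          = ‖p' - p‖ ^ 2 - 2 * ⟪p' - p, v - p⟫ + ‖v - p‖ ^ 2 := norm_sub_sq_real _ _
      have heq : (p' - p) - (v - p) = p' - v := by abel
      rw [heq] at hexp
      rw [dist_eq_norm, dist_eq_norm]
      refine lt_of_pow_lt_pow_left₀ 2 (norm_nonneg _) ?_
      have : ‖p - v‖ = ‖v - p‖ := norm_sub_rev _ _
      rw [this]
      nlinarith [norm_nonneg (v - p)]
    have key2 : ∀ v ∈ K', dist p' v < dist p v := by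
      intro v hv
      have h1 := hvar' v hv
      have hexp : ‖(p - p') - (v - p')‖ ^ 2
          = ‖p - p'‖ ^ 2 - 2 * ⟪p - p', v - p'⟫ + ‖v - p'‖ ^ 2 := norm_sub_sq_real _ _
      have heq : (p - p') - (v - p') = p - v := by abel
      rw [heq] at hexp
      have hnorm' : 0 < ‖p - p'‖ := by rwa [norm_sub_rev]
      rw [dist_eq_norm, dist_eq_norm]
      refine lt_of_pow_lt_pow_left₀ 2 (norm_nonneg _) ?_
      have : ‖p' - v‖ = ‖v - p'‖ := norm_sub_rev _ _
      rw [this]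
      nlinarith [norm_nonneg (v - p')]
    rcases h p hpK p' hpK' with ⟨v, hv, hle⟩ | ⟨v', hv', hle⟩
    · exact absurd hle (not_le.mpr (key1 v (subset_convexHull ℝ _ hv)))
    · exact absurd hle (not_le.mpr (key2 v' (subset_convexHull ℝ _ hv')))
end

section
/- Let p ∈ K and p' ∈ ℝ^m with p ≠ p', and let H = {x ∈ ℝ^m : ⟨h, x⟩ = a} be the orthogonal bisecting hyperplane of the segment pp', where h = p − p' and a = ½(‖p‖² − ‖p'‖²). Then H intersects K if and only if there exists v ∈ V with d(p, v) ≥ d(p', v). -/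
open RealInnerProductSpace

lemma dist_le_iff_inner_le {m : ℕ} (p p' v : EuclideanSpace ℝ (Fin m)) :
    dist p' v ≤ dist p v ↔ ⟪p - p', v⟫ ≤ (1 / 2) * (‖p‖ ^ 2 - ‖p'‖ ^ 2) := by
  rw [dist_eq_norm, dist_eq_norm]
  rw [← Real.sqrt_sq (norm_nonneg (p' - v)), ← Real.sqrt_sq (norm_nonneg (p - v)),
    Real.sqrt_le_sqrt_iff (by positivity)]
  have h1 : ‖p - v‖ ^ 2 = ‖p‖ ^ 2 - 2 * ⟪p, v⟫ + ‖v‖ ^ 2 := by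
    exact norm_sub_sq_real _ _
  have h2 : ‖p' - v‖ ^ 2 = ‖p'‖ ^ 2 - 2 * ⟪p', v⟫ + ‖v‖ ^ 2 := by
    exact norm_sub_sq_real _ _
  rw [h1, h2, inner_sub_left]
  constructor <;> intro h <;> nlinarith

/-- With `p ∈ K = conv(V)`, `p ≠ p'`, and `H` the orthogonal bisecting hyperplane of the
segment `pp'` (i.e. `H = {x : ⟪p - p', x⟫ = ½(‖p‖² - ‖p'‖²)}`), `H` intersects `K` iff
there exists `v ∈ V` with `d(p,v) ≥ d(p',v)`. -/
theorem bisector_intersects_hull_iff_pivot {m : ℕ} (V : Finset (EuclideanSpace ℝ (Fin m)))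
    (hV : V.Nonempty) (p p' : EuclideanSpace ℝ (Fin m))
    (hp : p ∈ convexHull ℝ (V : Set (EuclideanSpace ℝ (Fin m)))) (hne : p ≠ p') :
    ({x : EuclideanSpace ℝ (Fin m) | ⟪p - p', x⟫ = (1 / 2) * (‖p‖ ^ 2 - ‖p'‖ ^ 2)} ∩
        convexHull ℝ (V : Set (EuclideanSpace ℝ (Fin m)))).Nonempty ↔
      ∃ v ∈ V, dist p' v ≤ dist p v := by
  set a : ℝ := (1 / 2) * (‖p‖ ^ 2 - ‖p'‖ ^ 2) with ha
  set f : EuclideanSpace ℝ (Fin m) → ℝ := fun x => ⟪p - p', x⟫ with hf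
  have hlin : IsLinearMap ℝ f := ⟨fun x y => inner_add_right _ _ _,
    fun c x => real_inner_smul_right _ _ _⟩
  -- f p > a
  have hpa : a < f p := by
    have hne' : ‖p - p'‖ ≠ 0 := norm_ne_zero_iff.mpr (sub_ne_zero.mpr hne)
    have hpos : (0:ℝ) < ‖p - p'‖ ^ 2 := by positivity
    have hexp : ‖p - p'‖ ^ 2 = ‖p‖ ^ 2 - 2 * ⟪p, p'⟫ + ‖p'‖ ^ 2 := by
      exact norm_sub_sq_real _ _
    have hfp : f p = ‖p‖ ^ 2 - ⟪p, p'⟫ := by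
      show ⟪p - p', p⟫ = _
      rw [inner_sub_left, real_inner_self_eq_norm_sq, real_inner_comm p' p]
    rw [hfp, ha]
    nlinarith
  constructor
  · rintro ⟨x, hxH, hxK⟩
    by_contra hcon
    push_neg at hcon
    have hsub : convexHull ℝ (V : Set (EuclideanSpace ℝ (Fin m))) ⊆ {w | a < f w} := by
      apply convexHull_min _ (convex_halfSpace_gt hlin a)
      intro v hv
      have hlt : ¬ (dist p' v ≤ dist p v) := not_le.mpr (hcon v hv)
      rw [dist_le_iff_inner_le] at hlt
      exact lt_of_not_ge hlt
    have hax : a < f x := hsub hxK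
    have hx' : f x = a := hxH
    rw [hx'] at hax
    exact lt_irrefl a hax
  · rintro ⟨v, hvV, hvd⟩
    rw [dist_le_iff_inner_le] at hvd
    have hfv : f v ≤ a := hvd
    set t : ℝ := (f p - a) / (f p - f v) with ht
    have hden : 0 < f p - f v := by linarith
    have ht0 : 0 ≤ t := div_nonneg (by linarith) hden.le
    have ht1 : t ≤ 1 := (div_le_one hden).mpr (by linarith)
    refine ⟨t • v + (1 - t) • p, ?_, ?_⟩
    · show f (t • v + (1 - t) • p) = a
      rw [hlin.map_add, hlin.map_smul, hlin.map_smul, smul_eq_mul, smul_eq_mul, ht]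
      field_simp
      ring
    · exact (convex_convexHull ℝ _) (subset_convexHull ℝ _ hvV) hp ht0 (by linarith)
        (by ring)
end

section
/- Let p, p', v ∈ ℝ^m with p ≠ p' and suppose v is a p'-pivot for p, i.e., d(p, v) ≥ d(p', v). Then v ≠ p, and the point q on the segment joining p to v that is nearest to p' satisfies d(q, p') < d(p, p'). In particular each pivot step of the Triangle Algorithm strictly decreases the gap between the iterates. -/
/-- If `p ≠ p'` and `v` is a `p'`-pivot for `p` (i.e. `d(p,v) ≥ d(p',v)`), then `v ≠ p`,
and the point `q` of the segment joining `p` to `v` nearest to `p'` satisfies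
`d(q,p') < d(p,p')`: each pivot step strictly decreases the gap. -/
theorem pivot_step_decreases_gap {m : ℕ} (p p' v : EuclideanSpace ℝ (Fin m))
    (hne : p ≠ p') (hpiv : dist p' v ≤ dist p v) (q : EuclideanSpace ℝ (Fin m))
    (hq : q ∈ segment ℝ p v) (hqmin : ∀ r ∈ segment ℝ p v, dist q p' ≤ dist r p') :
    v ≠ p ∧ dist q p' < dist p p' := by
  have hvp : v ≠ p := by
    rintro rfl
    have h0 : dist p' v ≤ 0 := by simpa using hpiv
    exact hne ((by simpa [dist_comm] using le_antisymm h0 dist_nonneg : p' = v)).symm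
  refine ⟨hvp, ?_⟩
  set a : ℝ := ‖v - p‖ ^ 2 with ha
  set b : ℝ := ‖p - p'‖ ^ 2 with hb
  set c : ℝ := (inner ℝ (p' - p) (v - p) : ℝ) with hc
  have ha0 : 0 < a := pow_pos (norm_pos_iff.mpr (sub_ne_zero.mpr hvp)) 2
  have hb0 : 0 < b := pow_pos (norm_pos_iff.mpr (sub_ne_zero.mpr hne)) 2
  -- key inequality b ≤ 2c
  have hbc : b ≤ 2 * c := by
    have h1 : ‖p' - v‖ ≤ ‖p - v‖ := by simpa [dist_eq_norm] using hpiv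
    have h2 : ‖p' - v‖ ^ 2 ≤ ‖p - v‖ ^ 2 :=
      pow_le_pow_left₀ (norm_nonneg _) h1 2
    have h3 : p' - v = (p' - p) - (v - p) := by abel
    have h4 : ‖(p' - p) - (v - p)‖ ^ 2
        = ‖p' - p‖ ^ 2 - 2 * c + ‖v - p‖ ^ 2 := by
      rw [hc]; exact norm_sub_sq_real _ _
    have h5 : ‖p - v‖ = ‖v - p‖ := norm_sub_rev _ _
    have h6 : ‖p' - p‖ = ‖p - p'‖ := norm_sub_rev _ _
    rw [h3, h4, h5, h6] at h2
    linarith [h2]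
  set t : ℝ := min 1 (b / (2 * a)) with htdef
  have ht0 : 0 < t := lt_min one_pos (by positivity)
  have ht1 : t ≤ 1 := min_le_left _ _
  have hta : 2 * (t * a) ≤ b := by
    have : t ≤ b / (2 * a) := min_le_right _ _
    rw [le_div_iff₀ (by linarith : (0:ℝ) < 2 * a)] at this
    linarith
  set r : EuclideanSpace ℝ (Fin m) := p + t • (v - p) with hrdef
  have hr : r ∈ segment ℝ p v := by
    rw [segment_eq_image' ℝ p v]
    exact ⟨t, ⟨ht0.le, ht1⟩, rfl⟩
  have hdr : dist r p' ^ 2 = b - 2 * (t * c) + t ^ 2 * a := by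
    have h1 : r - p' = (p - p') + t • (v - p) := by rw [hrdef]; abel
    have h2 : ((inner ℝ (p - p') (t • (v - p))) : ℝ) = -(t * c) := by
      rw [real_inner_smul_right, hc]
      have : p - p' = -(p' - p) := by abel
      rw [this, inner_neg_left]
      ring
    have h3 : ‖t • (v - p)‖ ^ 2 = t ^ 2 * a := by
      rw [norm_smul, mul_pow, ha, Real.norm_eq_abs, sq_abs]
    rw [dist_eq_norm, h1, norm_add_sq_real, h2, h3, hb]
    ring
  have hrlt : dist r p' < dist p p' := by
    have hc0 : 0 < c := by linarith
    have hkey : dist r p' ^ 2 < dist p p' ^ 2 := by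
      rw [hdr, dist_eq_norm, ← hb]
      have h7 : t ^ 2 * a ≤ t * c := by
        have h8 : t * (2 * (t * a)) ≤ t * b := by
          exact mul_le_mul_of_nonneg_left hta ht0.le
        nlinarith
      nlinarith [mul_pos ht0 hc0]
    exact lt_of_pow_lt_pow_left₀ 2 dist_nonneg hkey
  exact lt_of_le_of_lt (hqmin r hr) hrlt
end

section
/- If (p₁, p₁') ∈ K × K' and (p₂, p₂') ∈ K × K' both attain the minimum distance, i.e., d(p₁, p₁') = d(p₂, p₂') = δ* = d(K, K'), then p₁ − p₁' = p₂ − p₂'. Consequently the optimal separating hyperplane direction is unique. -/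
/-- If `(p₁,p₁')` and `(p₂,p₂')` in `K × K'` both attain the minimum distance
`δ* = d(K,K')`, then `p₁ - p₁' = p₂ - p₂'`: the optimal separating direction is unique. -/
theorem optimal_direction_unique {m : ℕ} (V V' : Finset (EuclideanSpace ℝ (Fin m)))
    (hV : V.Nonempty) (hV' : V'.Nonempty) (p₁ p₁' p₂ p₂' : EuclideanSpace ℝ (Fin m))
    (h₁ : p₁ ∈ convexHull ℝ (V : Set (EuclideanSpace ℝ (Fin m))))
    (h₁' : p₁' ∈ convexHull ℝ (V' : Set (EuclideanSpace ℝ (Fin m))))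
    (h₂ : p₂ ∈ convexHull ℝ (V : Set (EuclideanSpace ℝ (Fin m))))
    (h₂' : p₂' ∈ convexHull ℝ (V' : Set (EuclideanSpace ℝ (Fin m))))
    (hd₁ : dist p₁ p₁' =
      sInf (Set.image2 dist (convexHull ℝ (V : Set (EuclideanSpace ℝ (Fin m))))
        (convexHull ℝ (V' : Set (EuclideanSpace ℝ (Fin m))))))
    (hd₂ : dist p₂ p₂' =
      sInf (Set.image2 dist (convexHull ℝ (V : Set (EuclideanSpace ℝ (Fin m))))
        (convexHull ℝ (V' : Set (EuclideanSpace ℝ (Fin m)))))) :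
    p₁ - p₁' = p₂ - p₂' := by
  set K := convexHull ℝ (V : Set (EuclideanSpace ℝ (Fin m)))
  set K' := convexHull ℝ (V' : Set (EuclideanSpace ℝ (Fin m)))
  set D := sInf (Set.image2 dist K K') with hD
  -- midpoints lie in the hulls
  have hq : midpoint ℝ p₁ p₂ ∈ K := by
    rw [midpoint_eq_smul_add, smul_add]
    exact convex_convexHull ℝ _ h₁ h₂ (by norm_num) (by norm_num) (by norm_num)
  have hq' : midpoint ℝ p₁' p₂' ∈ K' := by
    rw [midpoint_eq_smul_add, smul_add]
    exact convex_convexHull ℝ _ h₁' h₂' (by norm_num) (by norm_num) (by norm_num)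
  have hbdd : BddBelow (Set.image2 dist K K') := by
    refine ⟨0, ?_⟩
    rintro x ⟨a, ha, b, hb, rfl⟩
    exact dist_nonneg
  have hle : D ≤ dist (midpoint ℝ p₁ p₂) (midpoint ℝ p₁' p₂') :=
    csInf_le hbdd (Set.mem_image2_of_mem hq hq')
  set a := p₁ - p₁'
  set b := p₂ - p₂'
  have hmid : midpoint ℝ p₁ p₂ - midpoint ℝ p₁' p₂' = (2:ℝ)⁻¹ • (a + b) := by
    simp [midpoint_eq_smul_add, a, b, smul_add]
    module
  have hna : ‖a‖ = D := by rw [← hd₁, dist_eq_norm]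
  have hnb : ‖b‖ = D := by rw [← hd₂, dist_eq_norm]
  have hsum : D ≤ (2:ℝ)⁻¹ * ‖a + b‖ := by
    have := hle
    rw [dist_eq_norm, hmid, norm_smul] at this
    simpa using this
  have hpar : ‖a + b‖ ^ 2 + ‖a - b‖ ^ 2 = 2 * (‖a‖ ^ 2 + ‖b‖ ^ 2) := by
    simpa [sq] using parallelogram_law_with_norm ℝ a b
  have hDnn : 0 ≤ D := hna ▸ norm_nonneg a
  have habnn : 0 ≤ ‖a - b‖ := norm_nonneg _
  have : ‖a - b‖ = 0 := by nlinarith [norm_nonneg (a + b)]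
  exact sub_eq_zero.mp (norm_eq_zero.mp this)
end

section
/- Let p ∈ ℝ^m and let p' ∈ conv(V) be a witness for the non-membership of p, i.e., d(p', v) < d(p, v) for all v ∈ V. Then p ∉ conv(V) and ½ d(p, p') ≤ d(p, conv(V)) ≤ d(p, p'); that is, the witness approximates the distance from p to conv(V) to within a factor of 2. -/
open RealInnerProductSpace

lemma halfspace_convex {E : Type*} [NormedAddCommGroup E] [InnerProductSpace ℝ E]
    (a b : E) : Convex ℝ {x : E | dist x a ≤ dist x b} := by
  have hset : {x : E | dist x a ≤ dist x b}
      = {x : E | ⟪b - a, x⟫ ≤ (‖b‖ ^ 2 - ‖a‖ ^ 2) / 2} := by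
    ext x
    simp only [Set.mem_setOf_eq, dist_eq_norm]
    rw [← Real.sqrt_sq (norm_nonneg (x - a)), ← Real.sqrt_sq (norm_nonneg (x - b)),
      Real.sqrt_le_sqrt_iff (by positivity)]
    rw [@norm_sub_sq_real, @norm_sub_sq_real, inner_sub_left, real_inner_comm x a,
      real_inner_comm x b]
    constructor <;> intro h <;> linarith
  rw [hset]
  exact convex_halfSpace_le ⟨fun x y => inner_add_right _ _ _,
    fun c x => real_inner_smul_right _ _ _⟩ _

/-- If `p' ∈ conv(V)` is a witness for non-membership of `p` (`d(p',v) < d(p,v)` for all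
`v ∈ V`), then `p ∉ conv(V)` and `½ d(p,p') ≤ d(p, conv(V)) ≤ d(p,p')`. -/
theorem witness_approximates_distance {m : ℕ} (V : Finset (EuclideanSpace ℝ (Fin m)))
    (hV : V.Nonempty) (p p' : EuclideanSpace ℝ (Fin m))
    (hp' : p' ∈ convexHull ℝ (V : Set (EuclideanSpace ℝ (Fin m))))
    (hw : ∀ v ∈ V, dist p' v < dist p v) :
    p ∉ convexHull ℝ (V : Set (EuclideanSpace ℝ (Fin m))) ∧
    dist p p' / 2 ≤ Metric.infDist p (convexHull ℝ (V : Set (EuclideanSpace ℝ (Fin m)))) ∧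
    Metric.infDist p (convexHull ℝ (V : Set (EuclideanSpace ℝ (Fin m)))) ≤ dist p p' := by
  set C := convexHull ℝ (V : Set (EuclideanSpace ℝ (Fin m))) with hC
  -- every point of C is at least as close to p' as to p
  have hhalf : C ⊆ {x | dist x p' ≤ dist x p} := by
    apply convexHull_min _ (halfspace_convex p' p)
    intro v hv
    simp only [Set.mem_setOf_eq]
    rw [dist_comm v p', dist_comm v p]
    exact le_of_lt (hw v (by simpa using hv))
  -- key bound: for x ∈ C, dist p p' ≤ 2 * dist p x
  have hkey : ∀ x ∈ C, dist p p' / 2 ≤ dist p x := by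
    intro x hx
    have h1 : dist x p' ≤ dist x p := hhalf hx
    have h2 : dist p p' ≤ dist p x + dist x p' := dist_triangle _ _ _
    have := dist_comm p x
    linarith [dist_comm x p]
  have hpne : p ≠ p' := by
    obtain ⟨v, hv⟩ := hV
    intro h
    exact absurd (hw v hv) (by rw [h]; exact lt_irrefl _)
  constructor
  · intro hp
    have := hkey p hp
    simp only [dist_self] at this
    have : dist p p' ≤ 0 := by linarith
    exact hpne (by simpa [dist_le_zero] using this)
  constructor
  · have hne : C.Nonempty := ⟨p', hp'⟩
    by_contra h
    push_neg at h
    obtain ⟨x, hx, hlt⟩ := (Metric.infDist_lt_iff hne).mp h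
    linarith [hkey x hx]
  · exact Metric.infDist_le_dist_of_mem hp'
end
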